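/- For every c > 0 and every ū₀ ∈ [0,1], there exists exactly one μ̄ ∈ [0,1] satisfying the fixed-point equation μ̄ = (U₁(c,μ̄) − U₂(c,μ̄) + 1 + ū₀)/3. Consequently the Nash equilibrium system u₁ = U₁(c,μ̄), u₂ = U₂(c,μ̄), μ̄ = (u₁ − u₂ + 1 + ū₀)/3 has a unique solution (u₁, u₂, μ̄) with μ̄ ∈ [0,1]. -/

import Mathlib

/-- Equilibrium advertisement efficiency of major player 1 in the two-major-player
game, given unit advertisement cost `c` and mean consumer preference `m`. -/
noncomputable def U1 (c m : ℝ) : ℝ :=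
  -(m ^ 2 + 2 * c * m - m - c + c ^ 2 -
      Real.sqrt ((c + m) * (c ^ 2 + 5 * c - m ^ 2 + m) * (c - m + 1))) / (2 * c * (c + m))

/-- Equilibrium advertisement efficiency of major player 2 in the two-major-player
game, given unit advertisement cost `c` and mean consumer preference `m`. -/
noncomputable def U2 (c m : ℝ) : ℝ :=
  (m - c + Real.sqrt ((c + m) * (c ^ 2 + 5 * c - m ^ 2 + m) / (c - m + 1))) / (2 * c)

/-- Simplified form of `U1 c m - U2 c m` on `[0,1]`. -/
noncomputable def phi (c m : ℝ) : ℝ :=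
  (1 - 2*m) * (1 + Real.sqrt ((c^2+5*c+m-m^2)/(c^2+c+m-m^2))) / (2*c)

lemma U_diff_eq_phi (c m : ℝ) (hc : 0 < c) (hm0 : 0 ≤ m) (hm1 : m ≤ 1) :
    U1 c m - U2 c m = phi c m := by
  have hcm : (0:ℝ) < c + m := by linarith
  have hP : (0:ℝ) < c ^ 2 + 5 * c - m ^ 2 + m := by nlinarith
  have hA : (0:ℝ) < c - m + 1 := by linarith
  set a := Real.sqrt (c + m) with ha
  set b := Real.sqrt (c ^ 2 + 5 * c - m ^ 2 + m) with hb
  set d := Real.sqrt (c - m + 1) with hd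
  have ha2 : a^2 = c + m := Real.sq_sqrt hcm.le
  have hb2 : b^2 = c ^ 2 + 5 * c - m ^ 2 + m := Real.sq_sqrt hP.le
  have hd2 : d^2 = c - m + 1 := Real.sq_sqrt hA.le
  have hap : 0 < a := Real.sqrt_pos.mpr hcm
  have hbp : 0 < b := Real.sqrt_pos.mpr hP
  have hdp : 0 < d := Real.sqrt_pos.mpr hA
  have e1 : Real.sqrt ((c + m) * (c ^ 2 + 5 * c - m ^ 2 + m) * (c - m + 1)) = a*b*d := by
    rw [Real.sqrt_mul (by positivity), Real.sqrt_mul hcm.le]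
  have e2 : Real.sqrt ((c + m) * (c ^ 2 + 5 * c - m ^ 2 + m) / (c - m + 1)) = a*b/d := by
    rw [Real.sqrt_div (by positivity), Real.sqrt_mul hcm.le]
  have e3 : Real.sqrt ((c^2+5*c+m-m^2)/(c^2+c+m-m^2)) = b/(a*d) := by
    have h1 : c^2+5*c+m-m^2 = c ^ 2 + 5 * c - m ^ 2 + m := by ring
    have h2 : c^2+c+m-m^2 = (a*d)^2 := by rw [mul_pow, ha2, hd2]; ring
    rw [h1, h2, Real.sqrt_div hP.le, Real.sqrt_sq (by positivity)]
  rw [U1, U2, e1, e2, phi, e3, ← ha2]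
  field_simp
  linear_combination (a*b) * hd2 - (d*(1-m-c) + a*b) * ha2

lemma sqrt_comp (c : ℝ) (hc : 0 < c) {x y : ℝ} (hx0 : 0 ≤ x) (hx1 : x ≤ 1)
    (hy0 : 0 ≤ y) (hy1 : y ≤ 1) (hD : c^2+c+x-x^2 ≤ c^2+c+y-y^2) :
    Real.sqrt ((c^2+5*c+y-y^2)/(c^2+c+y-y^2)) ≤
      Real.sqrt ((c^2+5*c+x-x^2)/(c^2+c+x-x^2)) := by
  have hDx : (0:ℝ) < c^2+c+x-x^2 := by nlinarith
  have hDy : (0:ℝ) < c^2+c+y-y^2 := by nlinarith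
  apply Real.sqrt_le_sqrt
  rw [div_le_div_iff₀ hDy hDx]
  nlinarith

lemma phi_anti (c : ℝ) (hc : 0 < c) {x y : ℝ} (hx0 : 0 ≤ x) (hy1 : y ≤ 1)
    (hxy : x ≤ y) : phi c y ≤ phi c x := by
  have hx1 : x ≤ 1 := hxy.trans hy1
  have hy0 : 0 ≤ y := hx0.trans hxy
  rw [phi, phi, div_le_div_iff_of_pos_right (by positivity)]
  set sx := Real.sqrt ((c^2+5*c+x-x^2)/(c^2+c+x-x^2)) with hsx
  set sy := Real.sqrt ((c^2+5*c+y-y^2)/(c^2+c+y-y^2)) with hsy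
  have hsx0 : 0 ≤ sx := Real.sqrt_nonneg _
  have hsy0 : 0 ≤ sy := Real.sqrt_nonneg _
  by_cases h : y ≤ 1/2
  · -- both ≤ 1/2 : D increasing, s decreasing
    have hs : sy ≤ sx := sqrt_comp c hc hx0 hx1 hy0 hy1 (by nlinarith)
    have h1 : 1 - 2*y ≤ 1 - 2*x := by linarith
    nlinarith
  · by_cases h' : 1/2 ≤ x
    · have hs : sx ≤ sy := sqrt_comp c hc hy0 hy1 hx0 hx1 (by nlinarith)
      nlinarith [mul_nonneg (by linarith : (0:ℝ) ≤ y - x) (by linarith : (0:ℝ) ≤ 1 + sx),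
        mul_nonneg (by linarith : (0:ℝ) ≤ 2*y - 1) (by linarith : (0:ℝ) ≤ sy - sx)]
    · have hL : (1 - 2*y) * (1 + sy) ≤ 0 :=
        mul_nonpos_iff.mpr (Or.inr ⟨by linarith, by linarith⟩)
      have hR : 0 ≤ (1 - 2*x) * (1 + sx) :=
        mul_nonneg (by linarith) (by linarith)
      linarith

theorem stmt_8 (c ubar₀ : ℝ) (hc : 0 < c) (h₀ : ubar₀ ∈ Set.Icc (0 : ℝ) 1) :
    (∃! m : ℝ, m ∈ Set.Icc (0 : ℝ) 1 ∧ m = (U1 c m - U2 c m + 1 + ubar₀) / 3) ∧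
    ∃! t : ℝ × ℝ × ℝ, t.2.2 ∈ Set.Icc (0 : ℝ) 1 ∧
      t.1 = U1 c t.2.2 ∧ t.2.1 = U2 c t.2.2 ∧
      t.2.2 = (t.1 - t.2.1 + 1 + ubar₀) / 3 := by
  obtain ⟨hu0, hu1⟩ := h₀
  have key : ∀ m ∈ Set.Icc (0:ℝ) 1, U1 c m - U2 c m = phi c m :=
    fun m hm => U_diff_eq_phi c m hc hm.1 hm.2
  have hmain : ∃! m : ℝ, m ∈ Set.Icc (0:ℝ) 1 ∧ m = (U1 c m - U2 c m + 1 + ubar₀) / 3 := by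
    -- existence via IVT on G m = 3m - phi c m
    have hg : ∀ m ∈ Set.Icc (0:ℝ) 1, c^2+c+m-m^2 ≠ 0 := by
      intro m hm; have := hm.1; have := hm.2; nlinarith
    have h1 : ContinuousOn (fun m:ℝ => (c^2+5*c+m-m^2)/(c^2+c+m-m^2)) (Set.Icc 0 1) :=
      ContinuousOn.div (by fun_prop) (by fun_prop) hg
    have h2 : ContinuousOn (fun m:ℝ => Real.sqrt ((c^2+5*c+m-m^2)/(c^2+c+m-m^2)))
        (Set.Icc 0 1) := Real.continuous_sqrt.comp_continuousOn h1
    have hcont : ContinuousOn (fun m => 3*m - phi c m) (Set.Icc (0:ℝ) 1) := by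
      simp only [phi]
      apply ContinuousOn.sub (by fun_prop)
      exact ContinuousOn.div
        ((by fun_prop : ContinuousOn (fun m:ℝ => (1-2*m)) (Set.Icc 0 1)).mul
          (continuousOn_const.add h2)) continuousOn_const (fun m _ => by positivity)
    have hphi0 : 0 ≤ phi c 0 := by
      rw [phi]; norm_num
      positivity
    have hphi1 : phi c 1 ≤ 0 := by
      rw [phi]
      apply div_nonpos_of_nonpos_of_nonneg _ (by positivity)
      nlinarith [Real.sqrt_nonneg ((c^2+5*c+1-1^2)/(c^2+c+1-1^2))]
    have hmem : 1 + ubar₀ ∈ Set.Icc ((fun m => 3*m - phi c m) 0) ((fun m => 3*m - phi c m) 1) := by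
      constructor <;> simp only <;> linarith
    obtain ⟨m0, hm0, hGm0⟩ := intermediate_value_Icc (by norm_num : (0:ℝ) ≤ 1) hcont hmem
    simp only at hGm0
    refine ⟨m0, ⟨hm0, ?_⟩, ?_⟩
    · rw [key m0 hm0]; linarith
    · rintro m ⟨hm, heq⟩
      rw [key m hm] at heq
      have h1' : 3*m - phi c m = 1 + ubar₀ := by linarith
      by_contra hne
      rcases lt_or_gt_of_ne hne with h | h
      · have := phi_anti c hc hm.1 hm0.2 h.le; linarith
      · have := phi_anti c hc hm0.1 hm.2 h.le; linarith
  refine ⟨hmain, ?_⟩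
  obtain ⟨m0, ⟨hm0mem, hm0eq⟩, huniq⟩ := hmain
  refine ⟨(U1 c m0, U2 c m0, m0), ⟨hm0mem, rfl, rfl, hm0eq⟩, ?_⟩
  rintro ⟨u1, u2, m⟩ ⟨hm, h1, h2, h3⟩
  simp only at hm h1 h2 h3
  have hmm : m = m0 := huniq m ⟨hm, by rw [h1, h2] at h3; exact h3⟩
  subst hmm
  simp [h1, h2, Prod.ext_iff]
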